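/- arXiv:2405.16977 — 7 statements merged into one kernel-verified Lean document; each statement's English description precedes it below -/
import Mathlib

section
/- Let (X,d) be a metric space with d≤1 and F a family of continuous selfmaps such that F^n is pointwise equicontinuous for each n∈ℕ. Fix ε>0 and let ρ(x,y) = d(x,y) + Σ_{n=1}^∞ sup{d(f(x),f(y)) : f∈F^n}/(1+ε)^n. Then ρ is topologically equivalent to d, i.e., x_k→x in (X,d) if and only if ρ(x_k,x)→0. -/
open Metric Filter Topology

variable {X : Type*}

/-- A family `F` of selfmaps is uniformly equicontinuous. -/
def UnifEquicont [MetricSpace X] (F : Set (X → X)) : Prop :=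
  ∀ ε : ℝ, 0 < ε → ∃ δ : ℝ, 0 < δ ∧ ∀ x y : X, dist x y < δ → ∀ f ∈ F, dist (f x) (f y) < ε

/-- A family `F` of selfmaps is pointwise equicontinuous. -/
def PtEquicont [MetricSpace X] (F : Set (X → X)) : Prop :=
  ∀ x : X, ∀ ε : ℝ, 0 < ε →
    ∃ δ : ℝ, 0 < δ ∧ ∀ y : X, dist x y < δ → ∀ f ∈ F, dist (f x) (f y) < ε

/-- `famPow F n` is the family `F^n` of `n`-fold compositions of members of `F`. -/
def famPow (F : Set (X → X)) : ℕ → Set (X → X)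
  | 0 => {id}
  | n + 1 => {h | ∃ f ∈ F, ∃ g ∈ famPow F n, h = f ∘ g}

/-- The metric `ρ(x,y) = d(x,y) + Σₙ sup{d(f x, f y) : f ∈ F^n}/(1+ε)^n`. -/
noncomputable def rho [MetricSpace X] (F : Set (X → X)) (ε : ℝ) (x y : X) : ℝ :=
  dist x y + ∑' n : ℕ, (⨆ f ∈ famPow F (n + 1), dist (f x) (f y)) / (1 + ε) ^ (n + 1)

/-- `ρ` is a metric on `X`. -/
def IsMetric (ρ : X → X → ℝ) : Prop :=
  (∀ x, ρ x x = 0) ∧ (∀ x y, ρ x y = 0 → x = y) ∧ (∀ x y, ρ x y = ρ y x) ∧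
    (∀ x y z, ρ x z ≤ ρ x y + ρ y z)

private lemma supd_nonneg [MetricSpace X] (S : Set (X → X)) (x y : X) :
    0 ≤ ⨆ f ∈ S, dist (f x) (f y) :=
  Real.iSup_nonneg fun f => Real.iSup_nonneg fun _ => dist_nonneg

private lemma supd_le [MetricSpace X] {S : Set (X → X)} {x y : X} {c : ℝ} (hc : 0 ≤ c)
    (h : ∀ f ∈ S, dist (f x) (f y) ≤ c) : (⨆ f ∈ S, dist (f x) (f y)) ≤ c :=
  Real.iSup_le (fun f => Real.iSup_le (fun hf => h f hf) hc) hc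

set_option maxHeartbeats 1000000 in
theorem rho_equiv [MetricSpace X] (F : Set (X → X)) (ε : ℝ)
    (hd : ∀ x y : X, dist x y ≤ 1) (hFc : ∀ f ∈ F, Continuous f)
    (hF : ∀ n : ℕ, 0 < n → PtEquicont (famPow F n)) (hε : 0 < ε) :
    ∀ (u : ℕ → X) (x : X),
      Filter.Tendsto u Filter.atTop (nhds x) ↔
        Filter.Tendsto (fun k => rho F ε (u k) x) Filter.atTop (nhds 0) := by
  intro u x
  have hε1 : (1 : ℝ) < 1 + ε := by linarith
  set r : ℝ := 1 / (1 + ε) with hr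
  have hr0 : 0 < r := by positivity
  have hr1 : r < 1 := by
    rw [hr, div_lt_one (by linarith)]; linarith
  set a : X → ℕ → ℝ := fun y n =>
    (⨆ f ∈ famPow F (n + 1), dist (f y) (f x)) / (1 + ε) ^ (n + 1) with ha
  have hrho : ∀ y : X, rho F ε y x = dist y x + ∑' n : ℕ, a y n := fun y => rfl
  have hterm_nonneg : ∀ (y : X) (n : ℕ), 0 ≤ a y n := fun y n =>
    div_nonneg (supd_nonneg _ _ _) (by positivity)
  have hterm_le : ∀ (y : X) (n : ℕ), a y n ≤ r ^ (n + 1) := by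
    intro y n
    rw [ha, hr, div_pow, one_pow]
    exact div_le_div_of_nonneg_right (supd_le zero_le_one fun f _ => hd _ _) (by positivity)
  have hgsum : Summable fun n : ℕ => r ^ (n + 1) := by
    simpa [pow_succ] using (summable_geometric_of_lt_one hr0.le hr1).mul_right r
  have hsum : ∀ y : X, Summable (a y) := fun y =>
    Summable.of_nonneg_of_le (hterm_nonneg y) (hterm_le y) hgsum
  have hρ0 : ∀ k, 0 ≤ rho F ε (u k) x := fun k => by
    rw [hrho]
    exact add_nonneg dist_nonneg (tsum_nonneg (hterm_nonneg (u k)))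
  constructor
  · intro hu
    rw [Metric.tendsto_nhds]
    intro η hη
    obtain ⟨N, hN⟩ := (Metric.tendsto_atTop.mp
      (tendsto_sum_nat_add (fun n : ℕ => r ^ (n + 1)))) (η / 3) (by positivity)
    have htailr : (∑' i : ℕ, r ^ (i + N + 1)) < η / 3 := by
      have h := hN N le_rfl
      rw [Real.dist_eq, sub_zero] at h
      exact (le_abs_self _).trans_lt h
    set η' : ℝ := η / (3 * (N + 1)) with hη'
    have hη'0 : 0 < η' := by positivity
    have hev : ∀ n ∈ Finset.range N, ∀ᶠ k in atTop,
        (⨆ f ∈ famPow F (n + 1), dist (f (u k)) (f x)) ≤ η' := by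
      intro n _
      obtain ⟨δ, hδ0, hδ⟩ := hF (n + 1) n.succ_pos x η' hη'0
      filter_upwards [hu (Metric.ball_mem_nhds x hδ0)] with k hk
      refine supd_le hη'0.le fun f hf => ?_
      rw [dist_comm]
      exact (hδ (u k) (by rw [dist_comm]; exact Metric.mem_ball.mp hk) f hf).le
    have hev0 : ∀ᶠ k in atTop, dist (u k) x < η / 3 := by
      filter_upwards [hu (Metric.ball_mem_nhds x (by positivity : (0:ℝ) < η / 3))] with k hk
      exact Metric.mem_ball.mp hk
    filter_upwards [(Filter.eventually_all_finset (Finset.range N)).mpr hev, hev0]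
      with k hk1 hk2
    rw [Real.dist_eq, sub_zero, abs_of_nonneg (hρ0 k), hrho]
    have hsplit := Summable.sum_add_tsum_nat_add (f := a (u k)) N (hsum (u k))
    rw [← hsplit]
    have hhead : (∑ i ∈ Finset.range N, a (u k) i) ≤ η / 3 := by
      have h1 : ∀ i ∈ Finset.range N, a (u k) i ≤ η' := by
        intro i hi
        refine le_trans ?_ (hk1 i hi)
        rw [ha]
        exact div_le_self (supd_nonneg _ _ _) (one_le_pow₀ hε1.le)
      calc (∑ i ∈ Finset.range N, a (u k) i)
          ≤ ∑ _i ∈ Finset.range N, η' := Finset.sum_le_sum h1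
        _ = N * η' := by rw [Finset.sum_const, Finset.card_range, nsmul_eq_mul]
        _ ≤ η / 3 := by
            rw [hη', mul_div_assoc']
            rw [div_le_div_iff₀ (by positivity) (by norm_num)]
            nlinarith [Nat.cast_nonneg (α := ℝ) N, hη.le]
    have htail : (∑' i : ℕ, a (u k) (i + N)) ≤ ∑' i : ℕ, r ^ (i + N + 1) := by
      refine Summable.tsum_le_tsum (fun i => hterm_le (u k) (i + N)) ?_ ?_
      · exact (summable_nat_add_iff N).mpr (hsum (u k))
      · exact (summable_nat_add_iff N).mpr hgsum
    linarith [htail.trans_lt htailr]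
  · intro hρ
    rw [tendsto_iff_dist_tendsto_zero]
    refine squeeze_zero (fun k => dist_nonneg) (fun k => ?_) hρ
    rw [hrho]
    exact le_add_of_nonneg_right (tsum_nonneg (hterm_nonneg (u k)))
end

section
/- Let (X,d) be a metric space with d≤1, ε>0, and F a family of continuous selfmaps such that each F^n is pointwise equicontinuous. Define ρ(x,y) = d(x,y) + Σ_{n=1}^∞ sup{d(f(x),f(y)) : f∈F^n}/(1+ε)^n. Then every g∈F satisfies ρ(g(x),g(y)) ≤ (1+ε)·ρ(x,y) for all x,y∈X, i.e., g is (1+ε)-Lipschitz with respect to ρ. -/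
open Metric Filter Topology

variable {X : Type*}

lemma comp_mem_famPow (F : Set (X → X)) {g : X → X} (hg : g ∈ F) :
    ∀ n, ∀ h ∈ famPow F n, h ∘ g ∈ famPow F (n + 1) := by
  intro n
  induction n with
  | zero =>
    intro h hh
    simp only [famPow, Set.mem_singleton_iff] at hh
    subst hh
    exact ⟨g, hg, id, rfl, by ext z; rfl⟩
  | succ n ih =>
    rintro h ⟨f, hf, h', hh', rfl⟩
    exact ⟨f, hf, h' ∘ g, ih h' hh', rfl⟩

lemma sup_dist_nonneg [MetricSpace X] (s : Set (X → X)) (x y : X) :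
    0 ≤ ⨆ f ∈ s, dist (f x) (f y) :=
  Real.iSup_nonneg fun f => Real.iSup_nonneg fun _ => dist_nonneg

lemma sup_dist_le_one [MetricSpace X] (s : Set (X → X)) (x y : X)
    (hd : ∀ x y : X, dist x y ≤ 1) :
    (⨆ f ∈ s, dist (f x) (f y)) ≤ 1 :=
  Real.iSup_le (fun _ => Real.iSup_le (fun _ => hd _ _) zero_le_one) zero_le_one

lemma le_sup_dist [MetricSpace X] (s : Set (X → X)) (x y : X)
    (hd : ∀ x y : X, dist x y ≤ 1) {f : X → X} (hf : f ∈ s) :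
    dist (f x) (f y) ≤ ⨆ f ∈ s, dist (f x) (f y) := by
  have hb : BddAbove (Set.range fun f : X → X => ⨆ _ : f ∈ s, dist (f x) (f y)) := by
    refine ⟨1, ?_⟩
    rintro _ ⟨f, rfl⟩
    exact Real.iSup_le (fun _ => hd _ _) zero_le_one
  calc dist (f x) (f y) = ⨆ _ : f ∈ s, dist (f x) (f y) := by
        haveI : Nonempty (f ∈ s) := ⟨hf⟩
        exact (ciSup_const).symm
    _ ≤ _ := le_ciSup hb f

theorem rho_lipschitz [MetricSpace X] (F : Set (X → X)) (ε : ℝ)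
    (hd : ∀ x y : X, dist x y ≤ 1) (hFc : ∀ f ∈ F, Continuous f)
    (hF : ∀ n : ℕ, 0 < n → PtEquicont (famPow F n)) (hε : 0 < ε) :
    ∀ g ∈ F, ∀ x y : X, rho F ε (g x) (g y) ≤ (1 + ε) * rho F ε x y := by
  intro g hg x y
  have hr : (0 : ℝ) < 1 + ε := by linarith
  set T : ℕ → ℝ := fun n => ⨆ f ∈ famPow F (n + 1), dist (f x) (f y) with hTdef
  set U : ℕ → ℝ := fun n => ⨆ f ∈ famPow F (n + 1), dist (f (g x)) (f (g y)) with hUdef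
  have hT0 : ∀ n, 0 ≤ T n := fun n => sup_dist_nonneg _ _ _
  have hT1 : ∀ n, T n ≤ 1 := fun n => sup_dist_le_one _ _ _ hd
  have hU0 : ∀ n, 0 ≤ U n := fun n => sup_dist_nonneg _ _ _
  have hU1 : ∀ n, U n ≤ 1 := fun n => sup_dist_le_one _ _ _ hd
  -- geometric comparison
  have hrlt : 1 / (1 + ε) < 1 := by
    rw [div_lt_one hr]; linarith
  have hrpos : (0 : ℝ) ≤ 1 / (1 + ε) := by positivity
  have hgeo : Summable (fun n : ℕ => (1 / (1 + ε)) ^ n) :=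
    summable_geometric_of_lt_one hrpos hrlt
  have hsum : ∀ (a : ℕ → ℝ), (∀ n, 0 ≤ a n) → (∀ n, a n ≤ 1) → ∀ k : ℕ,
      Summable (fun n : ℕ => a n / (1 + ε) ^ (n + k)) := by
    intro a h0 h1 k
    refine Summable.of_nonneg_of_le (fun n => div_nonneg (h0 n) (pow_pos hr _).le)
      (fun n => ?_) ((hgeo.mul_right ((1 / (1 + ε)) ^ k)))
    have he : (1 / (1 + ε)) ^ n * (1 / (1 + ε)) ^ k = 1 / (1 + ε) ^ (n + k) := by
      rw [← pow_add, div_pow, one_pow]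
    rw [he]
    exact (div_le_div_iff_of_pos_right (pow_pos hr _)).mpr (h1 n)
  have hsumT : Summable (fun n : ℕ => T n / (1 + ε) ^ (n + 1)) := hsum T hT0 hT1 1
  have hsumT' : Summable (fun n : ℕ => T n / (1 + ε) ^ n) := by
    simpa using hsum T hT0 hT1 0
  have hsumU : Summable (fun n : ℕ => U n / (1 + ε) ^ (n + 1)) := hsum U hU0 hU1 1
  have hsumTs : Summable (fun n : ℕ => T (n + 1) / (1 + ε) ^ (n + 1)) := by
    have := hsumT'.comp_injective (add_right_injective 1)
    simpa [Function.comp_def, add_comm] using this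
  -- key pointwise bounds
  have hd0 : dist (g x) (g y) ≤ T 0 := by
    have hg1 : g ∈ famPow F 1 := ⟨g, hg, id, rfl, by ext z; rfl⟩
    exact le_sup_dist _ x y hd hg1
  have hUn : ∀ n, U n ≤ T (n + 1) := by
    intro n
    refine Real.iSup_le (fun f => Real.iSup_le (fun hf => ?_) (hT0 _)) (hT0 _)
    have hfg : f ∘ g ∈ famPow F (n + 2) := comp_mem_famPow F hg (n + 1) f hf
    exact le_sup_dist _ x y hd hfg
  -- assemble
  have step1 : rho F ε (g x) (g y) ≤ T 0 + ∑' n : ℕ, T (n + 1) / (1 + ε) ^ (n + 1) := by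
    refine add_le_add hd0 (Summable.tsum_le_tsum (fun n => ?_) hsumU hsumTs)
    exact (div_le_div_iff_of_pos_right (pow_pos hr _)).mpr (hUn n)
  have step2 : T 0 + ∑' n : ℕ, T (n + 1) / (1 + ε) ^ (n + 1)
      = ∑' n : ℕ, T n / (1 + ε) ^ n := by
    rw [Summable.tsum_eq_zero_add hsumT']
    simp
  have step3 : ∑' n : ℕ, T n / (1 + ε) ^ n
      = (1 + ε) * ∑' n : ℕ, T n / (1 + ε) ^ (n + 1) := by
    rw [← tsum_mul_left]
    congr 1
    ext n
    rw [pow_succ]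
    field_simp
  have step4 : (1 + ε) * (∑' n : ℕ, T n / (1 + ε) ^ (n + 1)) ≤ (1 + ε) * rho F ε x y := by
    apply mul_le_mul_of_nonneg_left _ hr.le
    unfold rho
    have : 0 ≤ dist x y := dist_nonneg
    linarith [le_refl (∑' n : ℕ, T n / (1 + ε) ^ (n + 1))]
  calc rho F ε (g x) (g y) ≤ T 0 + ∑' n : ℕ, T (n + 1) / (1 + ε) ^ (n + 1) := step1
    _ = ∑' n : ℕ, T n / (1 + ε) ^ n := step2
    _ = (1 + ε) * ∑' n : ℕ, T n / (1 + ε) ^ (n + 1) := step3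
    _ ≤ (1 + ε) * rho F ε x y := step4
end

section
/- Suppose (X,d) is a metric space and F⊂C(X) is a family such that F^n is pointwise equicontinuous for each n∈ℕ. Then for any ε>0 there exists a metric d_ε on X, topologically equivalent to d, such that every f∈F is (1+ε)-Lipschitz with respect to d_ε. -/
open Metric Filter Topology

variable {X : Type*}

lemma famPow_comp_mem {F : Set (X → X)} {g f : X → X} {n : ℕ}
    (hg : g ∈ famPow F n) (hf : f ∈ F) : g ∘ f ∈ famPow F (n + 1) := by
  induction n generalizing g with
  | zero => simp only [famPow] at hg; subst hg; exact ⟨f, hf, id, rfl, rfl⟩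
  | succ n ih =>
    obtain ⟨f', hf', g', hg', rfl⟩ := hg
    exact ⟨f', hf', g' ∘ f, ih hg', rfl⟩

noncomputable def Dn [MetricSpace X] (F : Set (X → X)) (n : ℕ) (x y : X) : ℝ :=
  sSup ((fun f => min (dist (f x) (f y)) 1) '' famPow F n)

set_option linter.unusedSectionVars false
section
variable [MetricSpace X] {F : Set (X → X)}

lemma Dn_nonneg (n : ℕ) (x y : X) : 0 ≤ Dn F n x y := by
  apply Real.sSup_nonneg
  rintro v ⟨f, _, rfl⟩
  exact le_min dist_nonneg zero_le_one

lemma Dn_le {n : ℕ} {x y : X} {c : ℝ} (hc : 0 ≤ c)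
    (h : ∀ f ∈ famPow F n, min (dist (f x) (f y)) 1 ≤ c) : Dn F n x y ≤ c := by
  apply Real.sSup_le _ hc
  rintro v ⟨f, hf, rfl⟩
  exact h f hf

lemma Dn_le_one (n : ℕ) (x y : X) : Dn F n x y ≤ 1 :=
  Dn_le zero_le_one fun _ _ => min_le_right _ _

lemma le_Dn {n : ℕ} {x y : X} {f : X → X} (hf : f ∈ famPow F n) :
    min (dist (f x) (f y)) 1 ≤ Dn F n x y :=
  le_csSup ⟨1, by rintro v ⟨g, _, rfl⟩; exact min_le_right _ _⟩ ⟨f, hf, rfl⟩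

lemma Dn_self (n : ℕ) (x : X) : Dn F n x x = 0 :=
  le_antisymm (Dn_le le_rfl fun f _ => by simp) (Dn_nonneg n x x)

lemma Dn_comm (n : ℕ) (x y : X) : Dn F n x y = Dn F n y x := by
  unfold Dn
  congr 1
  ext v
  constructor <;> rintro ⟨f, hf, rfl⟩ <;> exact ⟨f, hf, by simp [dist_comm]⟩

lemma Dn_triangle (n : ℕ) (x y z : X) : Dn F n x z ≤ Dn F n x y + Dn F n y z := by
  refine Dn_le (add_nonneg (Dn_nonneg n x y) (Dn_nonneg n y z)) fun f hf => ?_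
  have key : ∀ a b c : ℝ, 0 ≤ b → 0 ≤ c → a ≤ b + c → min a 1 ≤ min b 1 + min c 1 := by
    intro a b c hb hc habc
    rcases le_total b 1 with hb1 | hb1
    · rcases le_total c 1 with hc1 | hc1
      · rw [min_eq_left hb1, min_eq_left hc1]
        exact le_trans (min_le_left _ _) habc
      · rw [min_eq_right hc1]
        have := min_le_right a 1
        have : (0:ℝ) ≤ min b 1 := le_min hb zero_le_one
        linarith [min_le_right a 1]
    · rw [min_eq_right hb1]
      have : (0:ℝ) ≤ min c 1 := le_min hc zero_le_one
      linarith [min_le_right a 1]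
  have h1 := key (dist (f x) (f z)) (dist (f x) (f y)) (dist (f y) (f z))
    dist_nonneg dist_nonneg (dist_triangle _ _ _)
  exact h1.trans (add_le_add (le_Dn hf) (le_Dn hf))

lemma Dn_comp (n : ℕ) {f : X → X} (hf : f ∈ F) (x y : X) :
    Dn F n (f x) (f y) ≤ Dn F (n + 1) x y := by
  refine Dn_le (Dn_nonneg _ _ _) fun g hg => ?_
  exact le_Dn (famPow_comp_mem hg hf)

noncomputable def rhoD (F : Set (X → X)) (r : ℝ) (x y : X) : ℝ :=
  ∑' n : ℕ, Dn F n x y * r ^ n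

variable {r : ℝ} (hr0 : 0 < r) (hr1 : r < 1)
include hr0 hr1

lemma rhoD_summable (x y : X) : Summable (fun n => Dn F n x y * r ^ n) :=
  Summable.of_nonneg_of_le
    (fun n => mul_nonneg (Dn_nonneg n x y) (pow_nonneg hr0.le n))
    (fun n => by
      have := mul_le_of_le_one_left (pow_nonneg hr0.le n) (Dn_le_one (F := F) n x y)
      simpa using mul_le_mul_of_nonneg_right (Dn_le_one (F := F) n x y) (pow_nonneg hr0.le n))
    (summable_geometric_of_lt_one hr0.le hr1)

lemma rhoD_self (x : X) : rhoD F r x x = 0 := by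
  simp [rhoD, Dn_self]

lemma rhoD_comm (x y : X) : rhoD F r x y = rhoD F r y x := by
  unfold rhoD; congr 1; ext n; rw [Dn_comm]

lemma rhoD_triangle (x y z : X) : rhoD F r x z ≤ rhoD F r x y + rhoD F r y z := by
  rw [rhoD, rhoD, rhoD, ← Summable.tsum_add (rhoD_summable hr0 hr1 x y) (rhoD_summable hr0 hr1 y z)]
  refine Summable.tsum_le_tsum (fun n => ?_) (rhoD_summable hr0 hr1 x z)
    ((rhoD_summable hr0 hr1 x y).add (rhoD_summable hr0 hr1 y z))
  rw [← add_mul]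
  exact mul_le_mul_of_nonneg_right (Dn_triangle n x y z) (pow_nonneg hr0.le n)

lemma min_le_rhoD (x y : X) : min (dist x y) 1 ≤ rhoD F r x y := by
  have h0 : Dn F 0 x y = min (dist x y) 1 := by
    unfold Dn famPow
    simp
  have := Summable.le_tsum (rhoD_summable hr0 hr1 (F := F) x y) 0
    (fun j _ => mul_nonneg (Dn_nonneg j x y) (pow_nonneg hr0.le j))
  simpa [h0, rhoD] using this

lemma rhoD_eq_zero {x y : X} (h : rhoD F r x y = 0) : x = y := by
  have h1 := min_le_rhoD hr0 hr1 (F := F) x y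
  rw [h] at h1
  have hd : dist x y ≤ 0 := by
    rcases le_or_gt (dist x y) 1 with h2 | h2
    · rwa [min_eq_left h2] at h1
    · rw [min_eq_right h2.le] at h1; linarith
  exact eq_of_dist_eq_zero (le_antisymm hd dist_nonneg)

lemma rhoD_nonneg (x y : X) : 0 ≤ rhoD F r x y :=
  tsum_nonneg fun n => mul_nonneg (Dn_nonneg n x y) (pow_nonneg hr0.le n)

/-- head control -/
lemma rhoD_head (hF : ∀ n : ℕ, 0 < n → PtEquicont (famPow F n)) (x : X)
    {η : ℝ} (hη : 0 < η) (N : ℕ) :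
    ∃ δ > 0, ∀ y, dist x y < δ → ∀ n < N, Dn F n x y ≤ η := by
  induction N with
  | zero => exact ⟨1, one_pos, fun y _ n hn => absurd hn (Nat.not_lt_zero n)⟩
  | succ N ih =>
    obtain ⟨δ, hδ, hδ'⟩ := ih
    rcases Nat.eq_zero_or_pos N with hN | hN
    · subst hN
      refine ⟨min δ η, lt_min hδ hη, fun y hy n hn => ?_⟩
      have hn0 : n = 0 := by omega
      subst hn0
      refine Dn_le hη.le fun f hf => ?_
      simp only [famPow] at hf; subst hf
      exact le_trans (min_le_left _ _) (le_of_lt (lt_of_lt_of_le hy (min_le_right _ _)))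
    · obtain ⟨δ', hδ'0, hδ''⟩ := hF N hN x η hη
      refine ⟨min δ δ', lt_min hδ hδ'0, fun y hy n hn => ?_⟩
      rcases Nat.lt_succ_iff_lt_or_eq.mp hn with h | rfl
      · exact hδ' y (lt_of_lt_of_le hy (min_le_left _ _)) n h
      · exact Dn_le hη.le fun f hf =>
          le_trans (min_le_left _ _) (hδ'' y (lt_of_lt_of_le hy (min_le_right _ _)) f hf).le

end

set_option maxHeartbeats 1000000 in
theorem exists_equiv_metric_lipschitz [MetricSpace X] (F : Set (X → X)) (ε : ℝ)
    (hFc : ∀ f ∈ F, Continuous f)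
    (hF : ∀ n : ℕ, 0 < n → PtEquicont (famPow F n)) (hε : 0 < ε) :
    ∃ m' : MetricSpace X,
      m'.toUniformSpace.toTopologicalSpace = (inferInstance : TopologicalSpace X) ∧
        ∀ f ∈ F, ∀ x y : X, m'.dist (f x) (f y) ≤ (1 + ε) * m'.dist x y := by
  have h1ε : (0:ℝ) < 1 + ε := by linarith
  set r : ℝ := (1 + ε)⁻¹ with hrdef
  have hr0 : 0 < r := inv_pos.2 h1ε
  have hr1 : r < 1 := by
    rw [hrdef]
    rw [inv_lt_one_iff₀]
    right; linarith
  have h1r : (0:ℝ) < 1 - r := by linarith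
  -- continuity of rhoD with respect to d
  have hcont : ∀ x : X, ∀ η : ℝ, 0 < η → ∃ δ > 0, ∀ y, dist x y < δ → rhoD F r x y < η := by
    intro x η hη
    obtain ⟨N, hN⟩ := exists_pow_lt_of_lt_one (mul_pos (by linarith : (0:ℝ) < η / 2) h1r) hr1
    set η'' : ℝ := η / (2 * (N + 1)) with hη''def
    have hN1 : (0:ℝ) < N + 1 := by positivity
    have hη'' : 0 < η'' := by positivity
    obtain ⟨δ, hδ0, hδ⟩ := rhoD_head hr0 hr1 hF x hη'' N
    refine ⟨δ, hδ0, fun y hy => ?_⟩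
    have hsum := rhoD_summable hr0 hr1 (F := F) x y
    have hsplit := Summable.sum_add_tsum_nat_add (f := fun n => Dn F n x y * r ^ n) N hsum
    rw [rhoD, ← hsplit]
    have hhead : ∑ i ∈ Finset.range N, Dn F i x y * r ^ i ≤ N * η'' := by
      calc ∑ i ∈ Finset.range N, Dn F i x y * r ^ i
          ≤ ∑ _i ∈ Finset.range N, η'' := by
            refine Finset.sum_le_sum fun i hi => ?_
            have h1 : Dn F i x y ≤ η'' := hδ y hy i (Finset.mem_range.1 hi)
            calc Dn F i x y * r ^ i ≤ η'' * r ^ i :=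
                  mul_le_mul_of_nonneg_right h1 (pow_nonneg hr0.le i)
              _ ≤ η'' * 1 :=
                  mul_le_mul_of_nonneg_left (pow_le_one₀ hr0.le hr1.le) hη''.le
              _ = η'' := mul_one _
        _ = N * η'' := by
            rw [Finset.sum_const, Finset.card_range, nsmul_eq_mul]
    have hheadfin : (N : ℝ) * η'' ≤ η / 2 := by
      have h1 : (N : ℝ) * η'' ≤ ((N : ℝ) + 1) * η'' :=
        mul_le_mul_of_nonneg_right (by linarith) hη''.le
      have h2 : ((N : ℝ) + 1) * η'' = η / 2 := by
        rw [hη''def]; field_simp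
      linarith
    have htail : ∑' i : ℕ, Dn F (i + N) x y * r ^ (i + N) ≤ r ^ N * (1 - r)⁻¹ := by
      have hs1 : Summable (fun i : ℕ => Dn F (i + N) x y * r ^ (i + N)) :=
        (summable_nat_add_iff N).2 hsum
      have hs2 : Summable (fun i : ℕ => r ^ (i + N)) :=
        (summable_nat_add_iff N).2 (summable_geometric_of_lt_one hr0.le hr1)
      have h1 : ∑' i : ℕ, Dn F (i + N) x y * r ^ (i + N) ≤ ∑' i : ℕ, r ^ (i + N) := by
        refine Summable.tsum_le_tsum (fun i => ?_) hs1 hs2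
        calc Dn F (i + N) x y * r ^ (i + N) ≤ 1 * r ^ (i + N) :=
              mul_le_mul_of_nonneg_right (Dn_le_one _ _ _) (pow_nonneg hr0.le _)
          _ = r ^ (i + N) := one_mul _
      have h2 : ∑' i : ℕ, r ^ (i + N) = r ^ N * (1 - r)⁻¹ := by
        have he : (fun i : ℕ => r ^ (i + N)) = fun i : ℕ => r ^ i * r ^ N :=
          funext fun i => pow_add r i N
        rw [he, tsum_mul_right, tsum_geometric_of_lt_one hr0.le hr1, mul_comm]
      linarith
    have htailfin : r ^ N * (1 - r)⁻¹ < η / 2 := by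
      rw [← div_eq_mul_inv, div_lt_iff₀ h1r]
      exact hN
    linarith
  -- the open-set characterization
  have H : ∀ s : Set X, IsOpen s ↔ ∀ x ∈ s, ∃ ε' > 0, ∀ y, rhoD F r x y < ε' → y ∈ s := by
    intro s
    constructor
    · intro hs x hx
      obtain ⟨δ, hδ0, hδ⟩ := Metric.isOpen_iff.1 hs x hx
      refine ⟨min δ 1, lt_min hδ0 one_pos, fun y hy => ?_⟩
      apply hδ
      have h2 : min (dist x y) 1 < min δ 1 := lt_of_le_of_lt (min_le_rhoD hr0 hr1 x y) hy
      rw [mem_ball']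
      rcases le_or_gt (dist x y) 1 with h | h
      · rw [min_eq_left h] at h2; exact lt_of_lt_of_le h2 (min_le_left _ _)
      · rw [min_eq_right h.le] at h2; exact absurd h2 (not_lt.2 (min_le_right _ _))
    · intro hs
      rw [Metric.isOpen_iff]
      intro x hx
      obtain ⟨ε', hε'0, hε'⟩ := hs x hx
      obtain ⟨δ, hδ0, hδ⟩ := hcont x ε' hε'0
      exact ⟨δ, hδ0, fun y hy => hε' y (hδ y (mem_ball'.1 hy))⟩
  refine ⟨MetricSpace.ofDistTopology (rhoD F r) (rhoD_self hr0 hr1) (rhoD_comm hr0 hr1)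
    (rhoD_triangle hr0 hr1) H (fun x y h => rhoD_eq_zero hr0 hr1 h), rfl, ?_⟩
  intro f hf x y
  show rhoD F r (f x) (f y) ≤ (1 + ε) * rhoD F r x y
  have hsumxy := rhoD_summable hr0 hr1 (F := F) x y
  have hs1 : Summable (fun n : ℕ => Dn F (n + 1) x y * r ^ n) :=
    Summable.of_nonneg_of_le
      (fun n => mul_nonneg (Dn_nonneg _ _ _) (pow_nonneg hr0.le n))
      (fun n => by
        calc Dn F (n + 1) x y * r ^ n ≤ 1 * r ^ n :=
              mul_le_mul_of_nonneg_right (Dn_le_one _ _ _) (pow_nonneg hr0.le n)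
          _ = r ^ n := one_mul _)
      (summable_geometric_of_lt_one hr0.le hr1)
  have step1 : rhoD F r (f x) (f y) ≤ ∑' n : ℕ, Dn F (n + 1) x y * r ^ n :=
    Summable.tsum_le_tsum (fun n => mul_le_mul_of_nonneg_right (Dn_comp n hf x y) (pow_nonneg hr0.le n))
      (rhoD_summable hr0 hr1 _ _) hs1
  have hrne : r ≠ 0 := hr0.ne'
  have step2 : ∑' n : ℕ, Dn F (n + 1) x y * r ^ n
      = r⁻¹ * ∑' n : ℕ, Dn F (n + 1) x y * r ^ (n + 1) := by
    rw [← tsum_mul_left]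
    refine tsum_congr fun n => ?_
    rw [pow_succ]
    field_simp
  have step3 : ∑' n : ℕ, Dn F (n + 1) x y * r ^ (n + 1) ≤ rhoD F r x y := by
    rw [rhoD, Summable.tsum_eq_zero_add hsumxy]
    have h0 : 0 ≤ Dn F 0 x y * r ^ 0 := mul_nonneg (Dn_nonneg _ _ _) (pow_nonneg hr0.le 0)
    linarith
  have hrinv : r⁻¹ = 1 + ε := by rw [hrdef, inv_inv]
  calc rhoD F r (f x) (f y) ≤ ∑' n : ℕ, Dn F (n + 1) x y * r ^ n := step1
    _ = r⁻¹ * ∑' n : ℕ, Dn F (n + 1) x y * r ^ (n + 1) := step2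
    _ ≤ r⁻¹ * rhoD F r x y := mul_le_mul_of_nonneg_left step3 (inv_nonneg.2 hr0.le)
    _ = (1 + ε) * rhoD F r x y := by rw [hrinv]
end

section
/- Let (X,d) be a metric space, f:X→X continuous, and ε>0. Replacing d by d/(d+1) if necessary so that d≤1, define d_{f,ε}(x,y) = d(x,y) + Σ_{n=1}^∞ d(fⁿ(x),fⁿ(y))/(1+ε)^n, where fⁿ is the n-th iterate of f. Then d_{f,ε} is a metric topologically equivalent to d, and f is (1+ε)-Lipschitz with respect to d_{f,ε}. -/
open Metric Filter Topology

variable {X : Type*}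

/-- The metric `d_{f,ε}(x,y) = d(x,y) + Σₙ d(fⁿ x, fⁿ y)/(1+ε)^n`. -/
noncomputable def dfe [MetricSpace X] (f : X → X) (ε : ℝ) (x y : X) : ℝ :=
  dist x y + ∑' n : ℕ, dist (f^[n + 1] x) (f^[n + 1] y) / (1 + ε) ^ (n + 1)

section Aux

variable [MetricSpace X] {f : X → X} {ε : ℝ}

lemma geom_summable (hε : 0 < ε) :
    Summable (fun n : ℕ => (1 / (1 + ε)) ^ (n + 1)) := by
  have h0 : (0:ℝ) ≤ 1 / (1 + ε) := by positivity
  have h1 : 1 / (1 + ε) < 1 := by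
    rw [div_lt_one (by linarith)]; linarith
  simpa [pow_succ'] using (summable_geometric_of_lt_one h0 h1).mul_left (1 / (1 + ε))

lemma dfe_term_le (hd : ∀ x y : X, dist x y ≤ 1) (hε : 0 < ε) (x y : X) (n : ℕ) :
    dist (f^[n + 1] x) (f^[n + 1] y) / (1 + ε) ^ (n + 1) ≤ (1 / (1 + ε)) ^ (n + 1) := by
  rw [div_pow, one_pow]
  apply div_le_div_of_nonneg_right (hd _ _)
  positivity

lemma dfe_summable (hd : ∀ x y : X, dist x y ≤ 1) (hε : 0 < ε) (x y : X) :
    Summable (fun n : ℕ => dist (f^[n + 1] x) (f^[n + 1] y) / (1 + ε) ^ (n + 1)) :=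
  Summable.of_nonneg_of_le (fun n => by positivity) (dfe_term_le hd hε x y) (geom_summable hε)

lemma dist_le_dfe (hd : ∀ x y : X, dist x y ≤ 1) (hε : 0 < ε) (x y : X) :
    dist x y ≤ dfe f ε x y := by
  have := tsum_nonneg (L := SummationFilter.unconditional ℕ) (fun n : ℕ =>
    (by positivity : (0:ℝ) ≤ dist (f^[n + 1] x) (f^[n + 1] y) / (1 + ε) ^ (n + 1)))
  unfold dfe; linarith

end Aux

theorem dfe_metric_equiv_lipschitz [MetricSpace X] (f : X → X) (ε : ℝ)
    (hd : ∀ x y : X, dist x y ≤ 1) (hf : Continuous f) (hε : 0 < ε) :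
    IsMetric (dfe f ε) ∧
      (∀ (u : ℕ → X) (x : X),
        Filter.Tendsto u Filter.atTop (nhds x) ↔
          Filter.Tendsto (fun k => dfe f ε (u k) x) Filter.atTop (nhds 0)) ∧
      ∀ x y : X, dfe f ε (f x) (f y) ≤ (1 + ε) * dfe f ε x y := by
  have hsum := fun x y => dfe_summable (f := f) hd hε x y
  refine ⟨⟨?_, ?_, ?_, ?_⟩, ?_, ?_⟩
  · intro x; simp [dfe]
  · intro x y h
    have h1 := dist_le_dfe (f := f) hd hε x y
    have h2 : dist x y ≤ 0 := h ▸ h1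
    exact dist_le_zero.mp h2
  · intro x y; simp [dfe, dist_comm]
  · intro x y z
    unfold dfe
    have htri : ∀ n : ℕ, dist (f^[n+1] x) (f^[n+1] z) / (1 + ε) ^ (n + 1) ≤
        dist (f^[n+1] x) (f^[n+1] y) / (1 + ε) ^ (n + 1) +
        dist (f^[n+1] y) (f^[n+1] z) / (1 + ε) ^ (n + 1) := by
      intro n
      rw [← add_div]
      apply div_le_div_of_nonneg_right (dist_triangle _ _ _)
      positivity
    have := (hsum x z).tsum_le_tsum htri ((hsum x y).add (hsum y z))
    rw [Summable.tsum_add (hsum x y) (hsum y z)] at this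
    have := dist_triangle x y z
    linarith [(hsum x z).tsum_le_tsum htri ((hsum x y).add (hsum y z)),
      (Summable.tsum_add (hsum x y) (hsum y z))]
  · -- topological equivalence
    have hcont : Continuous (fun p : X × X => dfe f ε p.1 p.2) := by
      unfold dfe
      apply Continuous.add continuous_dist
      apply continuous_tsum
        (fun n => by
          have : Continuous (fun p : X × X => dist (f^[n+1] p.1) (f^[n+1] p.2)) :=
            (continuous_dist).comp
              (((hf.iterate (n+1)).comp continuous_fst).prodMk
                ((hf.iterate (n+1)).comp continuous_snd))
          exact this.div_const _)
        (geom_summable hε)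
      intro n p
      rw [Real.norm_of_nonneg (by positivity)]
      exact dfe_term_le hd hε _ _ n
    intro u x
    constructor
    · intro hu
      have : Filter.Tendsto (fun k => dfe f ε (u k) x) Filter.atTop (nhds (dfe f ε x x)) :=
        (hcont.tendsto (x, x)).comp (hu.prodMk_nhds tendsto_const_nhds)
      simpa [dfe] using this
    · intro hu
      rw [tendsto_iff_dist_tendsto_zero]
      apply squeeze_zero (fun k => dist_nonneg) (fun k => dist_le_dfe (f := f) hd hε (u k) x) hu
  · -- Lipschitz
    intro x y
    set a : ℕ → ℝ := fun n => dist (f^[n+1] x) (f^[n+1] y) / (1 + ε) ^ (n + 1) with ha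
    have hsa : Summable a := hsum x y
    have hkey : ∀ n : ℕ, dist (f^[n+1] (f x)) (f^[n+1] (f y)) / (1 + ε) ^ (n + 1)
        = (1 + ε) * a (n + 1) := by
      intro n
      have h1 : f^[n+1] (f x) = f^[n+2] x := (Function.iterate_succ_apply f (n+1) x).symm
      have h2 : f^[n+1] (f y) = f^[n+2] y := (Function.iterate_succ_apply f (n+1) y).symm
      rw [h1, h2, ha]
      simp only []
      rw [pow_succ]
      field_simp
      ring
    have hsum' : ∑' n : ℕ, dist (f^[n+1] (f x)) (f^[n+1] (f y)) / (1 + ε) ^ (n + 1)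
        = (1 + ε) * ∑' n : ℕ, a (n + 1) := by
      rw [← tsum_mul_left]
      exact tsum_congr hkey
    have hshift : ∑' n : ℕ, a n = a 0 + ∑' n : ℕ, a (n + 1) := hsa.tsum_eq_zero_add
    have ha0 : (1 + ε) * a 0 = dist (f x) (f y) := by
      rw [ha]; simp only []
      rw [pow_one]
      field_simp
      rfl
    have hT : 0 ≤ ∑' n : ℕ, a n := tsum_nonneg (fun n => by positivity)
    unfold dfe
    rw [hsum']
    have : dist (f x) (f y) + (1 + ε) * ∑' n : ℕ, a (n + 1) = (1 + ε) * ∑' n : ℕ, a n := by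
      rw [hshift]; ring_nf; linarith [ha0]
    rw [this]
    have hd0 : 0 ≤ dist x y := dist_nonneg
    have : (1 + ε) * ∑' n : ℕ, a n ≤ (1 + ε) * (dist x y + ∑' n : ℕ, a n) := by
      apply mul_le_mul_of_nonneg_left (by linarith) (by linarith)
    exact this
end

section
/- Suppose (X,d) is a metric space and F = {f₁,…,fₙ} is a finite family of continuous selfmaps of X (an IFS). Then for any ε>0 there is a metric d_ε on X, topologically equivalent to d, such that every fᵢ is (1+ε)-Lipschitz with respect to d_ε. -/
open Metric Filter Topology

variable {X : Type*}

namespace IFSAux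

variable [MetricSpace X]

/-- Evaluate a word (list of maps) at a point, applying maps left to right. -/
def ev (l : List (X → X)) (x : X) : X := l.foldl (fun y f => f y) x

@[simp] lemma ev_nil (x : X) : ev ([] : List (X → X)) x = x := rfl

@[simp] lemma ev_cons (f : X → X) (l : List (X → X)) (x : X) :
    ev (f :: l) x = ev l (f x) := rfl

lemma ev_continuous {F : Set (X → X)} (hFc : ∀ f ∈ F, Continuous f)
    (l : List (X → X)) (hl : ∀ f ∈ l, f ∈ F) : Continuous (ev l) := by
  induction l with
  | nil => exact continuous_id
  | cons f t ih =>
      have hf : Continuous f := hFc f (hl f (by simp))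
      have ht : Continuous (ev t) := ih fun g hg => hl g (by simp [hg])
      exact ht.comp hf

/-- The index type of words over `F`. -/
def W (F : Set (X → X)) : Type _ := {l : List (X → X) // ∀ f ∈ l, f ∈ F}

instance (F : Set (X → X)) : Nonempty (W F) := ⟨⟨[], by simp⟩⟩

/-- The candidate metric. -/
noncomputable def D (F : Set (X → X)) (ε : ℝ) (x y : X) : ℝ :=
  ⨆ w : W F, min (dist (ev w.1 x) (ev w.1 y)) 1 / (1 + ε) ^ w.1.length

section

variable {F : Set (X → X)} {ε : ℝ} (hε : 0 < ε)
include hε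

lemma one_le_pow (n : ℕ) : (1 : ℝ) ≤ (1 + ε) ^ n :=
  one_le_pow₀ (by linarith)

lemma term_nonneg (w : W F) (x y : X) :
    0 ≤ min (dist (ev w.1 x) (ev w.1 y)) 1 / (1 + ε) ^ w.1.length :=
  div_nonneg (le_min dist_nonneg zero_le_one) (pow_pos (by linarith) _).le

lemma term_le_one (w : W F) (x y : X) :
    min (dist (ev w.1 x) (ev w.1 y)) 1 / (1 + ε) ^ w.1.length ≤ 1 :=
  div_le_one_of_le₀ ((min_le_right _ _).trans (one_le_pow hε _))
    (pow_pos (by linarith) _).le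

lemma bddAbove_term (x y : X) :
    BddAbove (Set.range fun w : W F =>
      min (dist (ev w.1 x) (ev w.1 y)) 1 / (1 + ε) ^ w.1.length) := by
  refine ⟨1, ?_⟩
  rintro _ ⟨w, rfl⟩
  exact term_le_one hε w x y

lemma le_D (w : W F) (x y : X) :
    min (dist (ev w.1 x) (ev w.1 y)) 1 / (1 + ε) ^ w.1.length ≤ D F ε x y :=
  le_ciSup (bddAbove_term hε x y) w

lemma D_nonneg (x y : X) : 0 ≤ D F ε x y :=
  le_trans (term_nonneg hε ⟨[], by simp⟩ x y) (le_D hε ⟨[], by simp⟩ x y)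

lemma min_le_D (x y : X) : min (dist x y) 1 ≤ D F ε x y := by
  simpa using le_D hε ⟨[], by simp⟩ x y

lemma D_self (x : X) : D F ε x x = 0 := by
  refine le_antisymm (Real.iSup_le (fun w => ?_) le_rfl) (D_nonneg hε x x)
  simp

omit hε in
lemma D_comm (x y : X) : D F ε x y = D F ε y x := by
  unfold D
  congr 1
  ext w
  rw [dist_comm]

lemma eq_of_D_eq_zero (x y : X) (h : D F ε x y = 0) : x = y := by
  have h1 : min (dist x y) 1 ≤ 0 := h ▸ min_le_D hε x y
  have h2 : 0 ≤ dist x y := dist_nonneg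
  rcases min_le_iff.mp h1 with h3 | h3
  · exact eq_of_dist_eq_zero (le_antisymm h3 h2)
  · linarith

omit hε in
lemma min_one_triangle {a b c : ℝ} (h : a ≤ b + c) (hb : 0 ≤ b) (hc : 0 ≤ c) :
    min a 1 ≤ min b 1 + min c 1 := by
  rcases le_or_gt 1 b with hb1 | hb1
  · have : min b 1 = 1 := min_eq_right hb1
    have : (min a 1 : ℝ) ≤ 1 := min_le_right _ _
    have hcn : 0 ≤ min c 1 := le_min hc zero_le_one
    rw [min_eq_right hb1]
    linarith
  · rcases le_or_gt 1 c with hc1 | hc1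
    · have hbn : 0 ≤ min b 1 := le_min hb zero_le_one
      rw [min_eq_right hc1]
      have : (min a 1 : ℝ) ≤ 1 := min_le_right _ _
      linarith
    · rw [min_eq_left hb1.le, min_eq_left hc1.le]
      exact le_trans (min_le_left _ _) h

lemma D_triangle (x y z : X) : D F ε x z ≤ D F ε x y + D F ε y z := by
  refine Real.iSup_le (fun w => ?_)
    (add_nonneg (D_nonneg hε x y) (D_nonneg hε y z))
  have key : min (dist (ev w.1 x) (ev w.1 z)) 1 ≤
      min (dist (ev w.1 x) (ev w.1 y)) 1 + min (dist (ev w.1 y) (ev w.1 z)) 1 :=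
    min_one_triangle (dist_triangle _ _ _) dist_nonneg dist_nonneg
  have hp : (0 : ℝ) < (1 + ε) ^ w.1.length := pow_pos (by linarith) _
  calc min (dist (ev w.1 x) (ev w.1 z)) 1 / (1 + ε) ^ w.1.length
      ≤ (min (dist (ev w.1 x) (ev w.1 y)) 1 + min (dist (ev w.1 y) (ev w.1 z)) 1) /
        (1 + ε) ^ w.1.length := by gcongr
    _ = min (dist (ev w.1 x) (ev w.1 y)) 1 / (1 + ε) ^ w.1.length +
        min (dist (ev w.1 y) (ev w.1 z)) 1 / (1 + ε) ^ w.1.length := add_div _ _ _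
    _ ≤ D F ε x y + D F ε y z := add_le_add (le_D hε w x y) (le_D hε w y z)

lemma D_lipschitz {f : X → X} (hf : f ∈ F) (x y : X) :
    D F ε (f x) (f y) ≤ (1 + ε) * D F ε x y := by
  refine Real.iSup_le (fun w => ?_)
    (mul_nonneg (by linarith) (D_nonneg hε x y))
  obtain ⟨l, hl⟩ := w
  have hl' : ∀ g ∈ f :: l, g ∈ F := by
    intro g hg
    rcases List.mem_cons.mp hg with rfl | hg
    · exact hf
    · exact hl g hg
  have heq : min (dist (ev l (f x)) (ev l (f y))) 1 / (1 + ε) ^ l.length =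
      (1 + ε) * (min (dist (ev (f :: l) x) (ev (f :: l) y)) 1 /
        (1 + ε) ^ (f :: l).length) := by
    simp only [ev_cons, List.length_cons, pow_succ]
    have h1 : (0 : ℝ) < 1 + ε := by linarith
    field_simp
  rw [heq]
  exact mul_le_mul_of_nonneg_left (le_D hε ⟨f :: l, hl'⟩ x y) (by linarith)

lemma D_eventually_lt (hfin : F.Finite) (hFc : ∀ f ∈ F, Continuous f)
    (x : X) {η : ℝ} (hη : 0 < η) : ∀ᶠ y in 𝓝 x, D F ε x y < η := by
  have h1 : (1 : ℝ) / (1 + ε) < 1 := by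
    rw [div_lt_one (by linarith)]; linarith
  obtain ⟨N, hN⟩ := exists_pow_lt_of_lt_one (half_pos hη) h1
  have : Finite ↥F := hfin.to_subtype
  have hSfin : {l : List (X → X) | (∀ f ∈ l, f ∈ F) ∧ l.length ≤ N}.Finite := by
    have h2 : {l : List (X → X) | (∀ f ∈ l, f ∈ F) ∧ l.length ≤ N} ⊆
        (List.map (Subtype.val : ↥F → (X → X))) '' {l : List ↥F | l.length ≤ N} := by
      rintro l ⟨hlF, hlen⟩
      refine ⟨l.pmap (fun f hf => (⟨f, hf⟩ : ↥F)) hlF, by simpa using hlen, ?_⟩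
      simp [List.map_pmap]
    exact ((List.finite_length_le ↥F N).image _).subset h2
  have hev : ∀ᶠ y in 𝓝 x, ∀ l ∈ {l : List (X → X) | (∀ f ∈ l, f ∈ F) ∧ l.length ≤ N},
      dist (ev l y) (ev l x) < η / 2 := by
    refine hSfin.eventually_all.mpr ?_
    rintro l ⟨hlF, -⟩
    have hc : Continuous (ev l) := ev_continuous hFc l hlF
    exact Metric.tendsto_nhds.mp (hc.tendsto x) (η / 2) (half_pos hη)
  filter_upwards [hev] with y hy
  have hD : D F ε x y ≤ η / 2 := by
    refine Real.iSup_le (fun w => ?_) (half_pos hη).le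
    obtain ⟨l, hl⟩ := w
    rcases le_or_gt l.length N with hlen | hlen
    · have h3 : dist (ev l x) (ev l y) < η / 2 := by
        rw [dist_comm]; exact hy l ⟨hl, hlen⟩
      calc min (dist (ev l x) (ev l y)) 1 / (1 + ε) ^ l.length
          ≤ min (dist (ev l x) (ev l y)) 1 :=
            div_le_self (le_min dist_nonneg zero_le_one) (one_le_pow hε _)
        _ ≤ dist (ev l x) (ev l y) := min_le_left _ _
        _ ≤ η / 2 := h3.le
    · calc min (dist (ev l x) (ev l y)) 1 / (1 + ε) ^ l.length
          ≤ 1 / (1 + ε) ^ l.length := by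
            have := pow_pos (show (0:ℝ) < 1 + ε by linarith) l.length
            gcongr
            exact min_le_right _ _
        _ ≤ 1 / (1 + ε) ^ N := by
            apply one_div_le_one_div_of_le (pow_pos (by linarith) _)
            exact pow_le_pow_right₀ (by linarith) hlen.le
        _ = (1 / (1 + ε)) ^ N := by rw [div_pow, one_pow]
        _ ≤ η / 2 := hN.le
  linarith

end

end IFSAux

theorem ifs_exists_equiv_metric_lipschitz [MetricSpace X] (F : Set (X → X)) (ε : ℝ)
    (hfin : F.Finite) (hFc : ∀ f ∈ F, Continuous f) (hε : 0 < ε) :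
    ∃ m' : MetricSpace X,
      m'.toUniformSpace.toTopologicalSpace = (inferInstance : TopologicalSpace X) ∧
        ∀ f ∈ F, ∀ x y : X, m'.dist (f x) (f y) ≤ (1 + ε) * m'.dist x y := by
  classical
  refine ⟨MetricSpace.ofDistTopology (IFSAux.D F ε) (IFSAux.D_self hε) IFSAux.D_comm
    (IFSAux.D_triangle hε) ?_ (IFSAux.eq_of_D_eq_zero hε), rfl,
    fun f hf x y => IFSAux.D_lipschitz hε hf x y⟩
  intro s
  constructor
  · intro hs x hx
    obtain ⟨r, hr, hball⟩ := Metric.isOpen_iff.mp hs x hx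
    refine ⟨min r 1, lt_min hr one_pos, fun y hy => ?_⟩
    apply hball
    rw [Metric.mem_ball, dist_comm]
    by_contra hdy
    push_neg at hdy
    have h1 : min r 1 ≤ min (dist x y) 1 := min_le_min hdy le_rfl
    have h2 : min (dist x y) 1 ≤ IFSAux.D F ε x y := IFSAux.min_le_D hε x y
    linarith
  · intro hs
    rw [Metric.isOpen_iff]
    intro x hx
    obtain ⟨η, hη, hsub⟩ := hs x hx
    have hev := IFSAux.D_eventually_lt hε hfin hFc x hη
    obtain ⟨δ, hδ, hδ'⟩ := Metric.eventually_nhds_iff.mp hev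
    exact ⟨δ, hδ, fun y hy => hsub y (hδ' (by rwa [Metric.mem_ball] at hy))⟩
end

section
/- Suppose F is a pointwise equicontinuous family of continuous selfmaps of a compact metric space (X,d). Then for every ε>0 there is a metric d_ε topologically equivalent to d such that every f∈F is (1+ε)-Lipschitz with respect to d_ε. -/
open Metric Filter Topology

variable {X : Type*}

section Aux

variable [MetricSpace X]

/-- `Sd F n x y = sup {d(f x, f y) : f ∈ F^n}`. -/
noncomputable def Sd (F : Set (X → X)) (n : ℕ) (x y : X) : ℝ :=
  ⨆ f ∈ famPow F n, dist (f x) (f y)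

lemma rho_eq (F : Set (X → X)) (ε : ℝ) (x y : X) :
    rho F ε x y = dist x y + ∑' n : ℕ, Sd F (n + 1) x y / (1 + ε) ^ (n + 1) := rfl

lemma Sd_nonneg (F : Set (X → X)) (n : ℕ) (x y : X) : 0 ≤ Sd F n x y :=
  Real.iSup_nonneg fun _ => Real.iSup_nonneg fun _ => dist_nonneg

variable {F : Set (X → X)} {C : ℝ}

lemma Sd_le (hC0 : 0 ≤ C) (hC : ∀ (f : X → X) (x y : X), dist (f x) (f y) ≤ C)
    (n : ℕ) (x y : X) : Sd F n x y ≤ C :=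
  Real.iSup_le (fun f => Real.iSup_le (fun _ => hC f x y) hC0) hC0

lemma le_Sd (hC0 : 0 ≤ C) (hC : ∀ (f : X → X) (x y : X), dist (f x) (f y) ≤ C)
    {n : ℕ} {f : X → X} (hf : f ∈ famPow F n) (x y : X) :
    dist (f x) (f y) ≤ Sd F n x y := by
  have hb : BddAbove (Set.range fun g : X → X =>
      ⨆ _ : g ∈ famPow F n, dist (g x) (g y)) := by
    refine ⟨C, ?_⟩
    rintro _ ⟨g, rfl⟩
    exact Real.iSup_le (fun _ => hC g x y) hC0
  have h1 : dist (f x) (f y) = ⨆ _ : f ∈ famPow F n, dist (f x) (f y) :=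
    (ciSup_pos (f := fun _ => dist (f x) (f y)) hf).symm
  exact h1.trans_le (le_ciSup hb f)

lemma Sd_self (F : Set (X → X)) (n : ℕ) (x : X) : Sd F n x x = 0 :=
  le_antisymm (Real.iSup_le (fun f => Real.iSup_le (fun _ => by simp) le_rfl) le_rfl)
    (Sd_nonneg F n x x)

lemma Sd_comm (F : Set (X → X)) (n : ℕ) (x y : X) : Sd F n x y = Sd F n y x := by
  unfold Sd; simp_rw [dist_comm]

lemma Sd_triangle (hC0 : 0 ≤ C) (hC : ∀ (f : X → X) (x y : X), dist (f x) (f y) ≤ C)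
    (n : ℕ) (x y z : X) : Sd F n x z ≤ Sd F n x y + Sd F n y z := by
  refine Real.iSup_le (fun f => Real.iSup_le (fun hf => ?_) ?_) ?_ <;>
    try exact add_nonneg (Sd_nonneg F n x y) (Sd_nonneg F n y z)
  exact (dist_triangle (f x) (f y) (f z)).trans
    (add_le_add (le_Sd hC0 hC hf x y) (le_Sd hC0 hC hf y z))

lemma summable_aux {ε : ℝ} (hε : 0 < ε) (hC0 : 0 ≤ C) {u : ℕ → ℝ}
    (hu0 : ∀ n, 0 ≤ u n) (huC : ∀ n, u n ≤ C) :
    Summable (fun n : ℕ => u n / (1 + ε) ^ (n + 1)) := by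
  have h1 : (0:ℝ) < 1 + ε := by linarith
  have hr0 : (0:ℝ) ≤ (1 + ε)⁻¹ := by positivity
  have hr1 : (1 + ε)⁻¹ < 1 := by
    rw [inv_lt_one_iff₀]; right; linarith
  refine Summable.of_nonneg_of_le
    (fun n => div_nonneg (hu0 n) (by positivity)) (fun n => ?_)
    ((summable_geometric_of_lt_one hr0 hr1).mul_left C)
  have hpow : (1 + ε) ^ n ≤ (1 + ε) ^ (n + 1) :=
    pow_le_pow_right₀ (by linarith) (Nat.le_succ n)
  calc u n / (1 + ε) ^ (n + 1) ≤ C / (1 + ε) ^ (n + 1) := by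
        apply div_le_div_of_nonneg_right (huC n) (by positivity) |>.trans le_rfl
    _ ≤ C / (1 + ε) ^ n := by
        apply div_le_div_of_nonneg_left hC0 (by positivity) hpow |>.trans le_rfl
    _ = C * ((1 + ε)⁻¹) ^ n := by rw [div_eq_mul_inv, inv_pow]

omit [MetricSpace X] in
lemma famPow_comp {F : Set (X → X)} :
    ∀ {a : ℕ} {g : X → X}, g ∈ famPow F a → ∀ {b : ℕ} {f : X → X}, f ∈ famPow F b →
      g ∘ f ∈ famPow F (a + b) := by
  intro a
  induction a with
  | zero => intro g hg b f hf; rw [show g = id from hg]; simpa using hf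
  | succ n ih =>
    rintro g ⟨f₁, hf₁, g₁, hg₁, rfl⟩ b f hf
    have : n + 1 + b = (n + b) + 1 := by omega
    rw [this]
    exact ⟨f₁, hf₁, g₁ ∘ f, ih hg₁ hf, rfl⟩

omit [MetricSpace X] in
lemma mem_famPow_one {F : Set (X → X)} {f : X → X} (hf : f ∈ F) : f ∈ famPow F 1 :=
  ⟨f, hf, id, rfl, rfl⟩

/-- Pointwise equicontinuity on a compact space gives uniform equicontinuity. -/
lemma unif_of_pt [CompactSpace X] {F : Set (X → X)} (hF : PtEquicont F) :
    UnifEquicont F := by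
  have hequi : Equicontinuous (fun f : F => (f : X → X)) := by
    intro x
    rw [Metric.equicontinuousAt_iff]
    intro η hη
    obtain ⟨δ, hδ, h⟩ := hF x η hη
    exact ⟨δ, hδ, fun y hy f => h y (by rwa [dist_comm] at hy) f f.2⟩
  have := CompactSpace.uniformEquicontinuous_of_equicontinuous hequi
  rw [Metric.uniformEquicontinuous_iff] at this
  intro η hη
  obtain ⟨δ, hδ, h⟩ := this η hη
  exact ⟨δ, hδ, fun x y hxy f hf => h x y hxy ⟨f, hf⟩⟩

/-- Uniform equicontinuity of each `F^n`. -/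
lemma unif_famPow {F : Set (X → X)} (hF : UnifEquicont F) (n : ℕ) :
    UnifEquicont (famPow F n) := by
  induction n with
  | zero =>
    intro η hη
    refine ⟨η, hη, fun x y hxy f hf => ?_⟩
    rw [show f = id from hf]; exact hxy
  | succ n ih =>
    intro η hη
    obtain ⟨δ₁, hδ₁, h₁⟩ := hF η hη
    obtain ⟨δ, hδ, h⟩ := ih δ₁ hδ₁
    refine ⟨δ, hδ, ?_⟩
    rintro x y hxy _ ⟨f, hf, g, hg, rfl⟩
    exact h₁ (g x) (g y) (h x y hxy g hg) f hf

/-- Uniform equicontinuity of all `F^(n+1)`, `n < N`, simultaneously. -/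
lemma unif_famPow_lt {F : Set (X → X)} (hF : UnifEquicont F) (N : ℕ) {c : ℝ} (hc : 0 < c) :
    ∃ δ : ℝ, 0 < δ ∧ ∀ x y : X, dist x y < δ → ∀ n < N, ∀ f ∈ famPow F (n + 1),
      dist (f x) (f y) < c := by
  induction N with
  | zero => exact ⟨1, one_pos, fun x y _ n hn => absurd hn (Nat.not_lt_zero n)⟩
  | succ N ih =>
    obtain ⟨δ₁, hδ₁, h₁⟩ := ih
    obtain ⟨δ₂, hδ₂, h₂⟩ := unif_famPow hF (N + 1) c hc
    refine ⟨min δ₁ δ₂, lt_min hδ₁ hδ₂, fun x y hxy n hn f hf => ?_⟩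
    rcases Nat.lt_succ_iff_lt_or_eq.1 hn with hn | rfl
    · exact h₁ x y (hxy.trans_le (min_le_left _ _)) n hn f hf
    · exact h₂ x y (hxy.trans_le (min_le_right _ _)) f hf

set_option maxHeartbeats 1000000 in
/-- Key: `rho` is small when `dist` is small. -/
lemma rho_small [CompactSpace X] {F : Set (X → X)} (hF : UnifEquicont F) {ε : ℝ} (hε : 0 < ε) :
    ∀ η : ℝ, 0 < η → ∃ δ : ℝ, 0 < δ ∧ ∀ x y : X, dist x y < δ → rho F ε x y < η := by
  set C := Metric.diam (Set.univ : Set X) with hCdef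
  have hC0 : 0 ≤ C := diam_nonneg
  have hC : ∀ (f : X → X) (x y : X), dist (f x) (f y) ≤ C := fun f x y =>
    dist_le_diam_of_mem isCompact_univ.isBounded trivial trivial
  have h1 : (0:ℝ) < 1 + ε := by linarith
  set r := (1 + ε)⁻¹ with hrdef
  have hr0 : (0:ℝ) ≤ r := by positivity
  have hr1 : r < 1 := by rw [hrdef, inv_lt_one_iff₀]; right; linarith
  intro η hη
  have htend : Filter.Tendsto (fun N : ℕ => C * r ^ (N + 1) * (1 - r)⁻¹)
      Filter.atTop (𝓝 0) := by
    have h2 := (((tendsto_pow_atTop_nhds_zero_of_lt_one hr0 hr1).comp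
      (Filter.tendsto_add_atTop_nat 1)).const_mul C).mul_const (1 - r)⁻¹
    simpa [Function.comp] using h2
  obtain ⟨N, hN⟩ := (htend.eventually_lt_const (by positivity : (0:ℝ) < η/3)).exists
  obtain ⟨δ₀, hδ₀, hfin⟩ := unif_famPow_lt hF N (c := η / (3 * (N + 1))) (by positivity)
  refine ⟨min δ₀ (η/3), lt_min hδ₀ (by positivity), fun x y hxy => ?_⟩
  have hsum : Summable (fun n : ℕ => Sd F (n+1) x y / (1+ε)^(n+1)) :=
    summable_aux hε hC0 (fun n => Sd_nonneg F (n+1) x y) (fun n => Sd_le hC0 hC _ x y)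
  rw [rho_eq]
  have hsplit := (Summable.sum_add_tsum_nat_add N hsum).symm
  -- finite part
  have hc : (0:ℝ) < η / (3 * (N + 1)) := by positivity
  have hfin' : ∀ i < N, Sd F (i+1) x y / (1+ε)^(i+1) ≤ η / (3 * (N + 1)) := by
    intro i hi
    have hS : Sd F (i+1) x y ≤ η / (3 * (N + 1)) :=
      Real.iSup_le (fun f => Real.iSup_le (fun hf =>
        (hfin x y (hxy.trans_le (min_le_left _ _)) i hi f hf).le) hc.le) hc.le
    calc Sd F (i+1) x y / (1+ε)^(i+1) ≤ Sd F (i+1) x y / 1 := by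
          gcongr
          · exact Sd_nonneg F (i+1) x y
          · exact one_le_pow₀ (by linarith)
      _ = Sd F (i+1) x y := div_one _
      _ ≤ η / (3 * (N + 1)) := hS
  have hfinsum : ∑ i ∈ Finset.range N, Sd F (i+1) x y / (1+ε)^(i+1) ≤ η / 3 := by
    calc ∑ i ∈ Finset.range N, Sd F (i+1) x y / (1+ε)^(i+1)
        ≤ ∑ _i ∈ Finset.range N, η / (3 * (N + 1)) :=
          Finset.sum_le_sum fun i hi => hfin' i (Finset.mem_range.1 hi)
      _ = N * (η / (3 * (N + 1))) := by rw [Finset.sum_const, Finset.card_range]; ring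
      _ ≤ (N + 1) * (η / (3 * (N + 1))) := mul_le_mul_of_nonneg_right (by linarith) hc.le
      _ = η / 3 := by field_simp
  -- tail part
  have htailsum : Summable (fun n : ℕ => Sd F ((n+N)+1) x y / (1+ε)^((n+N)+1)) :=
    (summable_nat_add_iff N).2 hsum
  have hgeo : Summable (fun n : ℕ => (C * r ^ (N + 1)) * r ^ n) :=
    (summable_geometric_of_lt_one hr0 hr1).mul_left _
  have htail : ∑' n : ℕ, Sd F ((n+N)+1) x y / (1+ε)^((n+N)+1) < η / 3 := by
    have hle : ∑' n : ℕ, Sd F ((n+N)+1) x y / (1+ε)^((n+N)+1)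
        ≤ ∑' n : ℕ, (C * r ^ (N + 1)) * r ^ n := by
      refine Summable.tsum_le_tsum (fun n => ?_) htailsum hgeo
      have : Sd F ((n+N)+1) x y / (1+ε)^((n+N)+1) ≤ C / (1+ε)^((n+N)+1) := by
        gcongr
        exact Sd_le hC0 hC _ x y
      refine this.trans (le_of_eq ?_)
      rw [hrdef, div_eq_mul_inv, ← inv_pow, mul_assoc, ← pow_add]
      congr 2
      omega
    have heq : ∑' n : ℕ, (C * r ^ (N + 1)) * r ^ n = C * r ^ (N + 1) * (1 - r)⁻¹ := by
      rw [tsum_mul_left, tsum_geometric_of_lt_one hr0 hr1]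
    exact (hle.trans_eq heq).trans_lt hN
  have hd : dist x y < η / 3 := hxy.trans_le (min_le_right _ _)
  rw [hsplit]
  linarith

end Aux

theorem compact_exists_equiv_metric_lipschitz [MetricSpace X] [CompactSpace X]
    (F : Set (X → X)) (ε : ℝ)
    (hFc : ∀ f ∈ F, Continuous f) (hF : PtEquicont F) (hε : 0 < ε) :
    ∃ m' : MetricSpace X,
      m'.toUniformSpace.toTopologicalSpace = (inferInstance : TopologicalSpace X) ∧
        ∀ f ∈ F, ∀ x y : X, m'.dist (f x) (f y) ≤ (1 + ε) * m'.dist x y := by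
  classical
  set C := Metric.diam (Set.univ : Set X) with hCdef
  have hC0 : 0 ≤ C := diam_nonneg
  have hC : ∀ (f : X → X) (x y : X), dist (f x) (f y) ≤ C := fun f x y =>
    dist_le_diam_of_mem isCompact_univ.isBounded trivial trivial
  have h1 : (0:ℝ) < 1 + ε := by linarith
  have hU : UnifEquicont F := unif_of_pt hF
  have hsum : ∀ x y : X, Summable (fun n : ℕ => Sd F (n+1) x y / (1+ε)^(n+1)) := fun x y =>
    summable_aux hε hC0 (fun n => Sd_nonneg F (n+1) x y) (fun n => Sd_le hC0 hC _ x y)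
  have hts_nonneg : ∀ x y : X, 0 ≤ ∑' n : ℕ, Sd F (n+1) x y / (1+ε)^(n+1) := fun x y =>
    tsum_nonneg fun n => div_nonneg (Sd_nonneg F (n+1) x y) (by positivity)
  have hd_le_rho : ∀ x y : X, dist x y ≤ rho F ε x y := fun x y =>
    le_add_of_nonneg_right (hts_nonneg x y)
  have hself : ∀ x : X, rho F ε x x = 0 := by
    intro x
    rw [rho_eq]
    simp [Sd_self]
  have hcomm : ∀ x y : X, rho F ε x y = rho F ε y x := by
    intro x y
    rw [rho_eq, rho_eq, dist_comm]
    exact congrArg _ (tsum_congr fun n => by rw [Sd_comm])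
  have htri : ∀ x y z : X, rho F ε x z ≤ rho F ε x y + rho F ε y z := by
    intro x y z
    rw [rho_eq, rho_eq, rho_eq]
    have hterm : ∀ n : ℕ, Sd F (n+1) x z / (1+ε)^(n+1) ≤
        Sd F (n+1) x y / (1+ε)^(n+1) + Sd F (n+1) y z / (1+ε)^(n+1) := by
      intro n
      rw [← add_div]
      gcongr
      exact Sd_triangle hC0 hC (n+1) x y z
    have hts := Summable.tsum_le_tsum hterm (hsum x z) ((hsum x y).add (hsum y z))
    rw [Summable.tsum_add (hsum x y) (hsum y z)] at hts
    have := dist_triangle x y z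
    linarith
  have heq0 : ∀ x y : X, rho F ε x y = 0 → x = y := by
    intro x y h
    refine eq_of_dist_eq_zero (le_antisymm ?_ dist_nonneg)
    calc dist x y ≤ rho F ε x y := hd_le_rho x y
      _ = 0 := h
  have key := rho_small hU hε
  have Hopen : ∀ s : Set X, IsOpen s ↔
      ∀ x ∈ s, ∃ η > 0, ∀ y, rho F ε x y < η → y ∈ s := by
    intro s
    constructor
    · intro hs x hx
      obtain ⟨δ, hδ, hball⟩ := Metric.isOpen_iff.1 hs x hx
      exact ⟨δ, hδ, fun y hy =>
        hball (by rw [mem_ball, dist_comm]; exact (hd_le_rho x y).trans_lt hy)⟩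
    · intro h
      rw [Metric.isOpen_iff]
      intro x hx
      obtain ⟨η, hη, hb⟩ := h x hx
      obtain ⟨δ, hδ, hk⟩ := key η hη
      exact ⟨δ, hδ, fun y hy => hb y (hk x y (by rw [mem_ball, dist_comm] at hy; exact hy))⟩
  refine ⟨MetricSpace.ofDistTopology (rho F ε) hself hcomm htri Hopen heq0, rfl, ?_⟩
  intro f hf x y
  show rho F ε (f x) (f y) ≤ (1 + ε) * rho F ε x y
  have hf1 : f ∈ famPow F 1 := mem_famPow_one hf
  have hsum2 : Summable (fun n : ℕ => Sd F (n+2) x y / (1+ε)^(n+1)) :=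
    summable_aux hε hC0 (fun n => Sd_nonneg F (n+2) x y) (fun n => Sd_le hC0 hC _ x y)
  have hstep : ∀ n : ℕ, Sd F (n+1) (f x) (f y) ≤ Sd F (n+2) x y := by
    intro n
    refine Real.iSup_le (fun g => Real.iSup_le (fun hg => ?_) (Sd_nonneg F (n+2) x y))
      (Sd_nonneg F (n+2) x y)
    have hmem : g ∘ f ∈ famPow F (n+2) := by
      have := famPow_comp hg hf1
      simpa using this
    exact le_Sd hC0 hC hmem x y
  have ha : rho F ε (f x) (f y) ≤ Sd F 1 x y + ∑' n : ℕ, Sd F (n+2) x y / (1+ε)^(n+1) := by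
    rw [rho_eq]
    refine add_le_add (le_Sd hC0 hC hf1 x y)
      (Summable.tsum_le_tsum (fun n => ?_) (hsum (f x) (f y)) hsum2)
    gcongr
    exact hstep n
  have hb : Sd F 1 x y + ∑' n : ℕ, Sd F (n+2) x y / (1+ε)^(n+1)
      = (1 + ε) * ∑' n : ℕ, Sd F (n+1) x y / (1+ε)^(n+1) := by
    rw [← tsum_mul_left, Summable.tsum_eq_zero_add ((hsum x y).mul_left (1+ε))]
    congr 1
    · rw [pow_one]
      field_simp
    · refine tsum_congr fun n => ?_
      rw [show (n+1)+1 = n+2 from rfl]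
      field_simp
      ring
  have hcfin : (1 + ε) * (∑' n : ℕ, Sd F (n+1) x y / (1+ε)^(n+1)) ≤ (1 + ε) * rho F ε x y := by
    refine mul_le_mul_of_nonneg_left ?_ (by linarith)
    rw [rho_eq]
    exact le_add_of_nonneg_left dist_nonneg
  exact ha.trans (hb.le.trans hcfin)
end

section
/- If (X,d) is a complete metric space and F is a family of continuous selfmaps with each F^n pointwise equicontinuous, then for every ε>0 the metric ρ(x,y)=d'(x,y)+Σ_{n=1}^∞ sup{d'(f(x),f(y)):f∈F^n}/(1+ε)^n, where d'=d/(d+1), is a complete metric on X. -/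
open Metric Filter Topology

variable {X : Type*}

/-- The bounded metric `d' = d/(1+d)`. -/
noncomputable def dprime [MetricSpace X] (x y : X) : ℝ := dist x y / (1 + dist x y)

/-- `ρ(x,y) = d'(x,y) + Σₙ sup{d'(f x, f y) : f ∈ F^n}/(1+ε)^n` where `d' = d/(1+d)`. -/
noncomputable def rho' [MetricSpace X] (F : Set (X → X)) (ε : ℝ) (x y : X) : ℝ :=
  dprime x y + ∑' n : ℕ, (⨆ f ∈ famPow F (n + 1), dprime (f x) (f y)) / (1 + ε) ^ (n + 1)

section aux

variable [MetricSpace X]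

lemma dprime_nonneg (x y : X) : 0 ≤ dprime x y := by
  unfold dprime; positivity

lemma dprime_le_one (x y : X) : dprime x y ≤ 1 := by
  unfold dprime
  rw [div_le_one (by positivity)]
  linarith [dist_nonneg (x := x) (y := y)]

lemma dprime_le_dist (x y : X) : dprime x y ≤ dist x y := by
  unfold dprime
  exact div_le_self dist_nonneg (by linarith [dist_nonneg (x := x) (y := y)])

lemma dprime_self (x : X) : dprime x x = 0 := by simp [dprime]

lemma dprime_comm (x y : X) : dprime x y = dprime y x := by
  simp [dprime, dist_comm]

lemma dprime_mono {a b : ℝ} (ha : 0 ≤ a) (hab : a ≤ b) : a / (1 + a) ≤ b / (1 + b) := by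
  rw [div_le_div_iff₀ (by linarith) (by linarith)]
  nlinarith

lemma dprime_triangle (x y z : X) : dprime x z ≤ dprime x y + dprime y z := by
  unfold dprime
  set a := dist x y with ha
  set b := dist y z with hb
  set c := dist x z with hc
  have ha0 : 0 ≤ a := dist_nonneg
  have hb0 : 0 ≤ b := dist_nonneg
  have hc0 : 0 ≤ c := dist_nonneg
  have htri : c ≤ a + b := dist_triangle x y z
  calc c / (1 + c) ≤ (a + b) / (1 + (a + b)) := dprime_mono hc0 htri
    _ ≤ a / (1 + a) + b / (1 + b) := by
        rw [div_add_div _ _ (by linarith) (by linarith),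
          div_le_div_iff₀ (by linarith) (by positivity)]
        nlinarith [mul_nonneg (mul_nonneg ha0 hb0) hc0, mul_nonneg ha0 hb0]

lemma dist_lt_of_dprime_lt {x y : X} {δ : ℝ} (hδ : 0 < δ)
    (h : dprime x y < δ / (1 + δ)) : dist x y < δ := by
  by_contra hge
  push_neg at hge
  exact absurd (dprime_mono hδ.le hge) (by unfold dprime at h; linarith)

variable (F : Set (X → X)) (ε : ℝ)

/-- The `n`-th sup term. -/
noncomputable def supTerm (n : ℕ) (x y : X) : ℝ :=
  ⨆ f ∈ famPow F (n + 1), dprime (f x) (f y)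

lemma supTerm_nonneg (n : ℕ) (x y : X) : 0 ≤ supTerm F n x y :=
  Real.iSup_nonneg fun f => Real.iSup_nonneg fun _ => dprime_nonneg _ _

lemma supTerm_le_one (n : ℕ) (x y : X) : supTerm F n x y ≤ 1 :=
  Real.iSup_le (fun f => Real.iSup_le (fun _ => dprime_le_one _ _) zero_le_one) zero_le_one

lemma supTerm_le {n : ℕ} {x y : X} {a : ℝ} (ha : 0 ≤ a)
    (h : ∀ f ∈ famPow F (n + 1), dprime (f x) (f y) ≤ a) : supTerm F n x y ≤ a :=
  Real.iSup_le (fun f => Real.iSup_le (fun hf => h f hf) ha) ha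

lemma supTerm_self (n : ℕ) (x : X) : supTerm F n x x = 0 :=
  le_antisymm (supTerm_le F le_rfl (fun f _ => by rw [dprime_self])) (supTerm_nonneg F n x x)

lemma supTerm_comm (n : ℕ) (x y : X) : supTerm F n x y = supTerm F n y x := by
  unfold supTerm
  simp_rw [dprime_comm]

lemma le_supTerm {n : ℕ} {f : X → X} (hf : f ∈ famPow F (n + 1)) (x y : X) :
    dprime (f x) (f y) ≤ supTerm F n x y := by
  have hb : BddAbove (Set.range fun g : X → X =>
      ⨆ _ : g ∈ famPow F (n + 1), dprime (g x) (g y)) := by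
    refine ⟨1, ?_⟩
    rintro t ⟨g, rfl⟩
    exact Real.iSup_le (fun _ => dprime_le_one _ _) zero_le_one
  calc dprime (f x) (f y) = ⨆ _ : f ∈ famPow F (n + 1), dprime (f x) (f y) :=
        (ciSup_pos (f := fun _ => dprime (f x) (f y)) hf).symm
    _ ≤ supTerm F n x y := le_ciSup hb f

lemma supTerm_triangle (n : ℕ) (x y z : X) :
    supTerm F n x z ≤ supTerm F n x y + supTerm F n y z := by
  refine supTerm_le F (add_nonneg (supTerm_nonneg F n x y) (supTerm_nonneg F n y z)) fun f hf => ?_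
  calc dprime (f x) (f z) ≤ dprime (f x) (f y) + dprime (f y) (f z) := dprime_triangle _ _ _
    _ ≤ supTerm F n x y + supTerm F n y z :=
        add_le_add (le_supTerm F hf x y) (le_supTerm F hf y z)

lemma summable_supTerm (hε : 0 < ε) (x y : X) :
    Summable (fun n => supTerm F n x y / (1 + ε) ^ (n + 1)) := by
  have hr0 : (0:ℝ) ≤ 1 / (1 + ε) := by positivity
  have hr1 : 1 / (1 + ε) < 1 := by
    rw [div_lt_one (by linarith)]; linarith
  refine Summable.of_nonneg_of_le
    (fun n => div_nonneg (supTerm_nonneg F n x y) (by positivity))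
    (fun n => ?_) (((summable_geometric_of_lt_one hr0 hr1).mul_left (1 / (1 + ε))))
  have h1 : supTerm F n x y / (1 + ε) ^ (n + 1) ≤ 1 / (1 + ε) ^ (n + 1) := by
    gcongr
    exact supTerm_le_one F n x y
  have h2 : (1:ℝ) / (1 + ε) ^ (n + 1) = 1 / (1 + ε) * (1 / (1 + ε)) ^ n := by
    rw [div_pow, one_pow, div_mul_div_comm, one_mul, ← pow_succ']
  rw [h2] at h1
  exact h1

lemma rho'_eq (x y : X) :
    rho' F ε x y = dprime x y + ∑' n : ℕ, supTerm F n x y / (1 + ε) ^ (n + 1) := rfl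

lemma tsum_supTerm_nonneg (hε : 0 < ε) (x y : X) :
    0 ≤ ∑' n : ℕ, supTerm F n x y / (1 + ε) ^ (n + 1) :=
  tsum_nonneg fun n => div_nonneg (supTerm_nonneg F n x y)
    (le_of_lt (pow_pos (by linarith) _))

lemma dprime_le_rho' (hε : 0 < ε) (x y : X) : dprime x y ≤ rho' F ε x y := by
  rw [rho'_eq]
  linarith [tsum_supTerm_nonneg F ε hε x y]

lemma rho'_nonneg (hε : 0 < ε) (x y : X) : 0 ≤ rho' F ε x y :=
  le_trans (dprime_nonneg x y) (dprime_le_rho' F ε hε x y)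

lemma rho'_self (x : X) : rho' F ε x x = 0 := by
  rw [rho'_eq, dprime_self]
  have : ∀ n : ℕ, supTerm F n x x / (1 + ε) ^ (n + 1) = 0 := by
    intro n
    rw [supTerm_self, zero_div]
  rw [tsum_congr this, tsum_zero, add_zero]

lemma rho'_comm (x y : X) : rho' F ε x y = rho' F ε y x := by
  rw [rho'_eq, rho'_eq, dprime_comm]
  congr 1
  exact tsum_congr fun n => by rw [supTerm_comm]

lemma rho'_triangle (hε : 0 < ε) (x y z : X) :
    rho' F ε x z ≤ rho' F ε x y + rho' F ε y z := by
  rw [rho'_eq, rho'_eq, rho'_eq]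
  have h1 : ∑' n : ℕ, supTerm F n x z / (1 + ε) ^ (n + 1) ≤
      ∑' n : ℕ, (supTerm F n x y / (1 + ε) ^ (n + 1) + supTerm F n y z / (1 + ε) ^ (n + 1)) := by
    refine Summable.tsum_le_tsum (fun n => ?_) (summable_supTerm F ε hε x z)
      ((summable_supTerm F ε hε x y).add (summable_supTerm F ε hε y z))
    rw [← add_div]
    have hp : (0:ℝ) < (1 + ε) ^ (n + 1) := pow_pos (by linarith) _
    exact (div_le_div_iff_of_pos_right hp).mpr (supTerm_triangle F n x y z)
  rw [Summable.tsum_add (summable_supTerm F ε hε x y) (summable_supTerm F ε hε y z)] at h1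
  linarith [dprime_triangle x y z]

end aux

theorem rho'_complete_metric [MetricSpace X] [CompleteSpace X] (F : Set (X → X)) (ε : ℝ)
    (hFc : ∀ f ∈ F, Continuous f)
    (hF : ∀ n : ℕ, 0 < n → PtEquicont (famPow F n)) (hε : 0 < ε) :
    IsMetric (rho' F ε) ∧
      ∀ u : ℕ → X,
        (∀ η : ℝ, 0 < η → ∃ N : ℕ, ∀ m ≥ N, ∀ n ≥ N, rho' F ε (u m) (u n) < η) →
          ∃ x : X, Filter.Tendsto (fun k => rho' F ε (u k) x) Filter.atTop (nhds 0) := by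
  constructor
  · refine ⟨rho'_self F ε, fun x y h => ?_, rho'_comm F ε, rho'_triangle F ε hε⟩
    have hd : dprime x y = 0 :=
      le_antisymm (h ▸ dprime_le_rho' F ε hε x y) (dprime_nonneg x y)
    have : dist x y = 0 := by
      by_contra hne
      have hpos : 0 < dist x y := lt_of_le_of_ne dist_nonneg (Ne.symm hne)
      have : 0 < dprime x y := div_pos hpos (by linarith)
      linarith
    exact dist_le_zero.mp this.le
  · intro u hu
    -- u is Cauchy in d
    have hcauchy : CauchySeq u := by
      rw [Metric.cauchySeq_iff]
      intro δ hδ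
      obtain ⟨N, hN⟩ := hu (δ / (1 + δ)) (div_pos hδ (by linarith))
      refine ⟨N, fun m hm n hn => ?_⟩
      exact dist_lt_of_dprime_lt hδ
        (lt_of_le_of_lt (dprime_le_rho' F ε hε (u m) (u n)) (hN m hm n hn))
    obtain ⟨x, hx⟩ := cauchySeq_tendsto_of_complete hcauchy
    refine ⟨x, ?_⟩
    rw [Metric.tendsto_atTop]
    intro η hη
    -- geometric tail
    set r : ℝ := 1 / (1 + ε) with hr
    have hr0 : (0:ℝ) ≤ r := by positivity
    have hr1 : r < 1 := by rw [hr, div_lt_one (by linarith)]; linarith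
    have hgsum : Summable (fun n : ℕ => r ^ (n + 1)) := by
      simpa [pow_succ'] using (summable_geometric_of_lt_one hr0 hr1).mul_left r
    have htail : Tendsto (fun M : ℕ => ∑' n : ℕ, r ^ (n + M + 1)) atTop (𝓝 0) := by
      have := tendsto_sum_nat_add (fun n : ℕ => r ^ (n + 1))
      simpa using this
    obtain ⟨M, hM⟩ := (Metric.tendsto_atTop.mp htail (η / 3) (by linarith)).imp
      (fun M h => h M le_rfl)
    have hMtail : ∑' n : ℕ, r ^ (n + M + 1) < η / 3 := by
      have := hM
      rw [Real.dist_eq, sub_zero] at this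
      calc ∑' n : ℕ, r ^ (n + M + 1) ≤ |∑' n : ℕ, r ^ (n + M + 1)| := le_abs_self _
        _ < η / 3 := this
    -- equicontinuity at x for each n < M
    have hdelta : ∀ n : ℕ, ∃ δ : ℝ, 0 < δ ∧ ∀ y : X, dist x y < δ →
        ∀ f ∈ famPow F (n + 1), dist (f x) (f y) < η / (3 * (M + 1)) :=
      fun n => hF (n + 1) (Nat.succ_pos n) x (η / (3 * (M + 1))) (div_pos hη (by positivity))
    choose δ hδpos hδ using hdelta
    -- uniform δ for n < M
    set δ0 : ℝ := min 1 (Finset.inf' (Finset.range (M + 1)) ⟨0, by simp⟩ δ) with hδ0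
    have hδ0pos : 0 < δ0 := by
      rw [hδ0]
      refine lt_min one_pos ?_
      exact (Finset.lt_inf'_iff _).2 fun n _ => hδpos n
    have hδ0le : ∀ n < M + 1, δ0 ≤ δ n := by
      intro n hn
      exact le_trans (min_le_right _ _) (Finset.inf'_le _ (Finset.mem_range.mpr hn))
    -- N from convergence
    have hxconv := Metric.tendsto_atTop.mp hx
    obtain ⟨N, hN⟩ := hxconv (min δ0 (η / 3)) (lt_min hδ0pos (by linarith))
    refine ⟨N, fun k hk => ?_⟩
    have hdk : dist (u k) x < min δ0 (η / 3) := by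
      simpa [Real.dist_eq] using hN k hk
    rw [Real.dist_eq, sub_zero, abs_of_nonneg (rho'_nonneg F ε hε (u k) x)]
    -- split rho'
    have hsummable := summable_supTerm F ε hε (u k) x
    have hsplit : ∑' n : ℕ, supTerm F n (u k) x / (1 + ε) ^ (n + 1) =
        (∑ n ∈ Finset.range M, supTerm F n (u k) x / (1 + ε) ^ (n + 1)) +
          ∑' n : ℕ, supTerm F (n + M) (u k) x / (1 + ε) ^ (n + M + 1) :=
      (Summable.sum_add_tsum_nat_add M hsummable).symm
    -- bound the three pieces
    have hpiece1 : dprime (u k) x < η / 3 :=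
      lt_of_le_of_lt (dprime_le_dist _ _) (lt_of_lt_of_le hdk (min_le_right _ _))
    have hdkx : dist x (u k) < δ0 := by
      rw [dist_comm]
      exact lt_of_lt_of_le hdk (min_le_left _ _)
    have hpiece2 : ∑ n ∈ Finset.range M, supTerm F n (u k) x / (1 + ε) ^ (n + 1) ≤ η / 3 := by
      have hterm : ∀ n < M, supTerm F n (u k) x / (1 + ε) ^ (n + 1) ≤ η / (3 * (M + 1)) := by
        intro n hn
        have hsup : supTerm F n (u k) x ≤ η / (3 * (M + 1)) := by
          refine supTerm_le F (le_of_lt (div_pos hη (by positivity))) (fun f hf => ?_)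
          have := hδ n (u k) (lt_of_lt_of_le hdkx (hδ0le n (by omega))) f hf
          calc dprime (f (u k)) (f x) ≤ dist (f (u k)) (f x) := dprime_le_dist _ _
            _ = dist (f x) (f (u k)) := dist_comm _ _
            _ ≤ η / (3 * (M + 1)) := this.le
        calc supTerm F n (u k) x / (1 + ε) ^ (n + 1) ≤ supTerm F n (u k) x / 1 := by
              gcongr
              · exact supTerm_nonneg F n (u k) x
              · exact one_le_pow₀ (by linarith)
          _ = supTerm F n (u k) x := div_one _
          _ ≤ η / (3 * (M + 1)) := hsup
      calc ∑ n ∈ Finset.range M, supTerm F n (u k) x / (1 + ε) ^ (n + 1)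
          ≤ ∑ _n ∈ Finset.range M, η / (3 * (M + 1)) :=
            Finset.sum_le_sum fun n hn => hterm n (Finset.mem_range.mp hn)
        _ = M * (η / (3 * (M + 1))) := by rw [Finset.sum_const, Finset.card_range]; ring
        _ ≤ ((M : ℝ) + 1) * (η / (3 * (M + 1))) :=
            mul_le_mul_of_nonneg_right (by linarith)
              (le_of_lt (div_pos hη (by positivity)))
        _ = η / 3 := by
            have hM1 : ((M : ℝ) + 1) ≠ 0 := by positivity
            field_simp
    have hpiece3 : ∑' n : ℕ, supTerm F (n + M) (u k) x / (1 + ε) ^ (n + M + 1) ≤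
        ∑' n : ℕ, r ^ (n + M + 1) := by
      refine Summable.tsum_le_tsum (fun n => ?_) ((summable_nat_add_iff (f := fun n => supTerm F n (u k) x / (1 + ε) ^ (n + 1)) M).mpr hsummable) ?_
      · have : supTerm F (n + M) (u k) x / (1 + ε) ^ (n + M + 1) ≤ 1 / (1 + ε) ^ (n + M + 1) := by
          gcongr
          exact supTerm_le_one F _ _ _
        calc supTerm F (n + M) (u k) x / (1 + ε) ^ (n + M + 1)
            ≤ 1 / (1 + ε) ^ (n + M + 1) := this
          _ = r ^ (n + M + 1) := by rw [hr, div_pow, one_pow]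
      · exact (summable_nat_add_iff (f := fun n => r ^ (n + 1)) M).mpr hgsum
    have heq : rho' F ε (u k) x =
        dprime (u k) x + ((∑ n ∈ Finset.range M, supTerm F n (u k) x / (1 + ε) ^ (n + 1)) +
          ∑' n : ℕ, supTerm F (n + M) (u k) x / (1 + ε) ^ (n + M + 1)) := by
      rw [rho'_eq F ε (u k) x, hsplit]
    have h3 := lt_of_le_of_lt hpiece3 hMtail
    rw [heq]
    linarith
end
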